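/- ∑_{n=1}^∞ C(2n,n)/(n²·4^n)·zⁿ = 2·∫_0^z log(2/(1+√(1-t)))·dt/t for all z ∈ [0,1), and consequently ∑_{n=1}^∞ C(2n,n)/(n²·4^n) = 2·∫_0^1 log(2/(1+√(1-t)))·dt/t (both sides being finite). -/

import Mathlib

open Real MeasureTheory intervalIntegral Filter Topology

noncomputable def cb (n : ℕ) : ℝ := Nat.centralBinom n / 4 ^ n

lemma cb_nonneg (n : ℕ) : 0 ≤ cb n := by unfold cb; positivity

lemma cb_rec (n : ℕ) : 2 * ((n:ℝ) + 1) * cb (n + 1) = (2 * n + 1) * cb n := by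
  have h := Nat.succ_mul_centralBinom_succ n
  have h' : ((n:ℝ) + 1) * (Nat.centralBinom (n+1) : ℝ)
      = 2 * (2 * n + 1) * Nat.centralBinom n := by exact_mod_cast congrArg (Nat.cast (R := ℝ)) h
  unfold cb
  have h4 : (4:ℝ) ^ (n+1) = 4 * 4 ^ n := by ring
  rw [h4]
  field_simp
  nlinarith [h', pow_pos (show (0:ℝ) < 4 by norm_num) n]

lemma cb_le_one (n : ℕ) : cb n ≤ 1 := by
  induction n with
  | zero => simp [cb, Nat.centralBinom_zero]
  | succ n ih =>
    have h := cb_rec n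
    have hpos : (0:ℝ) < 2 * ((n:ℝ) + 1) := by positivity
    have : cb (n+1) = (2 * n + 1) * cb n / (2 * ((n:ℝ) + 1)) := by
      field_simp; linarith [h]
    rw [this, div_le_one hpos]
    nlinarith [cb_nonneg n]

lemma cb_one : cb 1 = 1/2 := by
  have : Nat.centralBinom 1 = 2 := rfl
  simp [cb, this]; norm_num

lemma summable_poly_geo {z : ℝ} (hz : |z| < 1) :
    Summable (fun n : ℕ => ((n:ℝ) + 1) * |z| ^ n) := by
  have h1 : Summable (fun n : ℕ => (n:ℝ) * |z| ^ n) := by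
    simpa using summable_pow_mul_geometric_of_norm_lt_one (R := ℝ) 1 (by simpa using hz)
  have h2 : Summable (fun n : ℕ => |z| ^ n) := summable_geometric_of_lt_one (abs_nonneg z) hz
  simpa [add_mul] using h1.add h2

lemma summable_bd {b : ℕ → ℝ} (C : ℝ) (hb : ∀ n, |b n| ≤ C * ((n:ℝ)+1)) {z : ℝ} (hz : |z| < 1) :
    Summable (fun n : ℕ => b n * z ^ n) := by
  refine Summable.of_norm_bounded (g := fun n : ℕ => C * (((n:ℝ)+1) * |z| ^ n))
    ((summable_poly_geo hz).mul_left C) fun n => ?_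
  rw [norm_mul, norm_pow, Real.norm_eq_abs, Real.norm_eq_abs]
  calc |b n| * |z| ^ n ≤ (C * ((n:ℝ)+1)) * |z| ^ n := by
        apply mul_le_mul_of_nonneg_right (hb n) (by positivity)
    _ = C * (((n:ℝ)+1) * |z| ^ n) := by ring

lemma hasDerivAt_series {b : ℕ → ℝ} (hb : ∀ n, |b n| ≤ 1) {z : ℝ} (hz : |z| < 1) :
    HasDerivAt (fun x : ℝ => ∑' n : ℕ, b n * x ^ (n+1)) (∑' n : ℕ, b n * ((n:ℝ)+1) * z ^ n) z := by
  set r : ℝ := (1 + |z|) / 2 with hr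
  have hr1 : r < 1 := by rw [hr]; linarith
  have hzr : |z| < r := by rw [hr]; linarith [abs_nonneg z]
  have hr0 : 0 < r := lt_of_le_of_lt (abs_nonneg z) hzr
  have hrabs : |r| < 1 := by rwa [abs_of_pos hr0]
  have hu : Summable (fun n : ℕ => ((n:ℝ)+1) * r ^ n) := by
    simpa [abs_of_pos hr0] using summable_poly_geo hrabs
  refine hasDerivAt_tsum_of_isPreconnected hu (isOpen_Ioo (a := -r) (b := r))
      (convex_Ioo _ _).isPreconnected
      (g' := fun n y => b n * ((n:ℝ)+1) * y ^ n)
      (fun n y _ => ?_)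
      (fun n y hy => ?_) (y₀ := 0) ?_ ?_ ?_
  · simpa [mul_assoc, mul_comm, mul_left_comm] using (hasDerivAt_pow (n+1) y).const_mul (b n)
  · have hy' : |y| ≤ r := by
      rw [abs_le]; exact ⟨(hy.1).le, hy.2.le⟩
    rw [Real.norm_eq_abs, abs_mul, abs_mul]
    calc |b n| * |((n:ℝ)+1)| * |y ^ n| ≤ 1 * |((n:ℝ)+1)| * |y ^ n| := by
          apply mul_le_mul_of_nonneg_right (mul_le_mul_of_nonneg_right (hb n) (abs_nonneg _)) (abs_nonneg _)
      _ = ((n:ℝ)+1) * |y| ^ n := by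
          rw [one_mul, abs_pow, abs_of_nonneg (by positivity : (0:ℝ) ≤ (n:ℝ)+1)]
      _ ≤ ((n:ℝ)+1) * r ^ n := by
          apply mul_le_mul_of_nonneg_left (pow_le_pow_left₀ (abs_nonneg y) hy' n) (by positivity)
  · rw [Set.mem_Ioo]; constructor <;> [linarith; linarith]
  · refine Summable.of_norm_bounded (g := fun _ : ℕ => (0:ℝ)) summable_zero fun n => ?_
    simp
  · rw [Set.mem_Ioo]; rw [abs_lt] at hzr; exact ⟨hzr.1, hzr.2⟩

noncomputable def Fs (z : ℝ) : ℝ := ∑' n : ℕ, cb (n+1) * z^(n+1)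
noncomputable def Gs (z : ℝ) : ℝ := ∑' n : ℕ, (cb (n+1)/((n:ℝ)+1)) * z^(n+1)
noncomputable def Hs (z : ℝ) : ℝ := ∑' n : ℕ, (cb (n+1)/((n:ℝ)+1)^2) * z^(n+1)

lemma abs_cb_le (n : ℕ) : |cb (n+1)| ≤ 1 := by
  rw [abs_of_nonneg (cb_nonneg _)]; exact cb_le_one _

lemma abs_cb_div_le (n : ℕ) : |cb (n+1)/((n:ℝ)+1)| ≤ 1 := by
  rw [abs_div, abs_of_nonneg (cb_nonneg _), abs_of_nonneg (by positivity : (0:ℝ) ≤ (n:ℝ)+1)]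
  rw [div_le_one (by positivity)]
  calc cb (n+1) ≤ 1 := cb_le_one _
    _ ≤ (n:ℝ)+1 := by
          have : (0:ℝ) ≤ (n:ℝ) := n.cast_nonneg
          linarith

lemma abs_cb_div_sq_le (n : ℕ) : |cb (n+1)/((n:ℝ)+1)^2| ≤ 1 := by
  rw [abs_div, abs_of_nonneg (cb_nonneg _), abs_of_nonneg (by positivity : (0:ℝ) ≤ ((n:ℝ)+1)^2)]
  rw [div_le_one (by positivity)]
  have h0 : (0:ℝ) ≤ (n:ℝ) := n.cast_nonneg
  calc cb (n+1) ≤ 1 := cb_le_one _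
    _ ≤ ((n:ℝ)+1)^2 := by nlinarith

lemma key1 {z : ℝ} (hz : |z| < 1) :
    2 * (1 - z) * (∑' n : ℕ, cb (n+1) * ((n:ℝ)+1) * z^n) = 1 + Fs z := by
  have hus : Summable (fun n : ℕ => cb (n+1) * ((n:ℝ)+1) * z^n) := by
    refine summable_bd (b := fun n => cb (n+1) * ((n:ℝ)+1)) 1 (fun n => ?_) hz
    have hn : (0:ℝ) ≤ (n:ℝ)+1 := by positivity
    rw [one_mul, abs_mul, abs_of_nonneg hn]
    simpa using mul_le_mul_of_nonneg_right (abs_cb_le n) hn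
  set u : ℕ → ℝ := fun n => cb (n+1) * ((n:ℝ)+1) * z^n with hu
  set S : ℝ := ∑' n, u n with hS
  have hA : Summable (fun n : ℕ => u (n+1)) := (summable_nat_add_iff 1).2 hus
  have hshift : ∑' n : ℕ, u (n+1) = S - 1/2 := by
    have h := hus.tsum_eq_zero_add
    have hu0 : u 0 = 1/2 := by simp [hu, cb_one]
    rw [hu0] at h
    rw [hS]; linarith [h]
  have hFsS : Summable (fun n : ℕ => cb (n+1) * z^(n+1)) := by
    have : ∀ n : ℕ, cb (n+1) * z^(n+1) = (cb (n+1) * z) * z^n := by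
      intro n; ring
    rw [funext this]
    refine summable_bd (b := fun n => cb (n+1) * z) 1 (fun n => ?_) hz
    rw [one_mul, abs_mul]
    calc |cb (n+1)| * |z| ≤ 1 * 1 :=
          mul_le_mul (abs_cb_le n) hz.le (abs_nonneg z) zero_le_one
      _ ≤ (n:ℝ)+1 := by
          have : (0:ℝ) ≤ (n:ℝ) := n.cast_nonneg
          linarith
  have h2 : (fun n : ℕ => 2 * u (n+1)) = fun n : ℕ => (2*(n:ℝ)+3) * (cb (n+1) * z^(n+1)) := by
    funext n
    have hrec := cb_rec (n+1)
    push_cast at hrec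
    have hun : u (n+1) = cb (n+2) * ((n:ℝ)+1+1) * z^(n+1) := by
      simp only [hu]; push_cast; ring
    rw [hun]
    linear_combination z^(n+1) * hrec
  have h3 : (fun n : ℕ => 2 * (u n * z)) = fun n : ℕ => (2*(n:ℝ)+2) * (cb (n+1) * z^(n+1)) := by
    funext n; simp only [hu]; ring
  have hvA : Summable (fun n : ℕ => (2*(n:ℝ)+3) * (cb (n+1) * z^(n+1))) := by
    rw [← h2]; exact hA.mul_left 2
  have hvB : Summable (fun n : ℕ => (2*(n:ℝ)+2) * (cb (n+1) * z^(n+1))) := by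
    rw [← h3]; exact (hus.mul_right z).mul_left 2
  have hA2 : ∑' n : ℕ, (2*(n:ℝ)+3) * (cb (n+1) * z^(n+1)) = 2*S - 1 := by
    rw [← h2, tsum_mul_left, hshift]; ring
  have hB2 : ∑' n : ℕ, (2*(n:ℝ)+2) * (cb (n+1) * z^(n+1)) = 2*(S*z) := by
    rw [← h3, tsum_mul_left, tsum_mul_right]
  have hsub : ∑' n : ℕ, ((2*(n:ℝ)+3) * (cb (n+1) * z^(n+1)) - (2*(n:ℝ)+2) * (cb (n+1) * z^(n+1)))
      = (2*S - 1) - 2*(S*z) := by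
    rw [hvA.tsum_sub hvB, hA2, hB2]
  have hterm : (fun n : ℕ => (2*(n:ℝ)+3) * (cb (n+1) * z^(n+1)) - (2*(n:ℝ)+2) * (cb (n+1) * z^(n+1)))
      = fun n : ℕ => cb (n+1) * z^(n+1) := by
    funext n; ring
  rw [hterm] at hsub
  have : Fs z = (2*S - 1) - 2*(S*z) := hsub
  rw [this]; ring

lemma Fs_zero : Fs 0 = 0 := by simp [Fs]
lemma Gs_zero : Gs 0 = 0 := by simp [Gs]
lemma Hs_zero : Hs 0 = 0 := by simp [Hs]

lemma mem_uIcc_abs {z t : ℝ} (hz : |z| < 1) (ht : t ∈ Set.uIcc 0 z) : |t| < 1 := by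
  rw [Set.mem_uIcc] at ht
  have h1 : z ≤ |z| := le_abs_self z
  have h2 : -|z| ≤ z := neg_abs_le z
  rw [abs_lt]
  rcases ht with ⟨h3, h4⟩ | ⟨h3, h4⟩ <;> constructor <;> linarith

lemma hasDerivAt_Fs {t : ℝ} (ht : |t| < 1) :
    HasDerivAt Fs (∑' n : ℕ, cb (n+1) * ((n:ℝ)+1) * t^n) t :=
  hasDerivAt_series abs_cb_le ht

lemma hasDerivAt_Gs {t : ℝ} (ht : |t| < 1) :
    HasDerivAt Gs (∑' n : ℕ, cb (n+1) * t^n) t := by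
  have h := hasDerivAt_series abs_cb_div_le ht
  have he : (∑' n : ℕ, (cb (n+1)/((n:ℝ)+1)) * ((n:ℝ)+1) * t^n) = ∑' n : ℕ, cb (n+1) * t^n := by
    refine tsum_congr fun n => ?_
    have hn : ((n:ℝ)+1) ≠ 0 := by positivity
    field_simp
  exact he ▸ h

lemma hasDerivAt_Hs {t : ℝ} (ht : |t| < 1) :
    HasDerivAt Hs (∑' n : ℕ, (cb (n+1)/((n:ℝ)+1)) * t^n) t := by
  have h := hasDerivAt_series abs_cb_div_sq_le ht
  have he : (∑' n : ℕ, (cb (n+1)/((n:ℝ)+1)^2) * ((n:ℝ)+1) * t^n)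
      = ∑' n : ℕ, (cb (n+1)/((n:ℝ)+1)) * t^n := by
    refine tsum_congr fun n => ?_
    have hn : ((n:ℝ)+1) ≠ 0 := by positivity
    field_simp
  exact he ▸ h

lemma sqrt_deriv {t : ℝ} (ht : t < 1) :
    HasDerivAt (fun x : ℝ => Real.sqrt (1-x)) (-(1/(2*Real.sqrt (1-t)))) t := by
  have h1 : HasDerivAt (fun x : ℝ => 1 - x) (-1) t := by
    simpa using (hasDerivAt_id t).const_sub 1
  have h2 := (Real.hasDerivAt_sqrt (by intro h; linarith [h] : (1:ℝ)-t ≠ 0)).comp t h1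
  refine h2.congr_deriv ?_
  ring

lemma Fs_eq {z : ℝ} (hz : |z| < 1) : 1 + Fs z = 1 / Real.sqrt (1 - z) := by
  have key : ∀ t ∈ Set.uIcc (0:ℝ) z,
      HasDerivAt (fun x => Real.sqrt (1-x) * (1 + Fs x)) 0 t := by
    intro t ht
    have ht1 : |t| < 1 := mem_uIcc_abs hz ht
    have hlt : t < 1 := lt_of_le_of_lt (le_abs_self t) ht1
    have hs0 : 0 < Real.sqrt (1-t) := Real.sqrt_pos.2 (by linarith)
    have hsq : Real.sqrt (1-t)^2 = 1-t := Real.sq_sqrt (by linarith)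
    have hd2 : HasDerivAt (fun x => 1 + Fs x) (∑' n : ℕ, cb (n+1)*((n:ℝ)+1)*t^n) t :=
      (hasDerivAt_Fs ht1).const_add 1
    have hd := (sqrt_deriv hlt).mul hd2
    have hk := key1 ht1
    have hzero : -(1/(2*Real.sqrt (1-t))) * (1 + Fs t)
        + Real.sqrt (1-t) * (∑' n : ℕ, cb (n+1)*((n:ℝ)+1)*t^n) = 0 := by
      have hne : Real.sqrt (1-t) ≠ 0 := ne_of_gt hs0
      rw [← hk, ← hsq]
      field_simp
      rw [Real.sqrt_sq hs0.le]
      ring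
    rw [hzero] at hd
    exact hd
  have hint := intervalIntegral.integral_eq_sub_of_hasDerivAt key
    (_root_.intervalIntegrable_const (c := (0:ℝ)))
  simp [Fs_zero, Real.sqrt_one] at hint
  -- hint should say √(1-z)*(1+Fs z) = 1 (possibly rearranged)
  have hs0 : 0 < Real.sqrt (1-z) := Real.sqrt_pos.2 (by
    have := abs_lt.1 hz; linarith [this.2])
  have hmain : Real.sqrt (1-z) * (1 + Fs z) = 1 := by linarith [hint]
  field_simp
  linarith [hmain]

lemma summable_D1 {z : ℝ} (hz : |z| < 1) : Summable (fun n : ℕ => cb (n+1) * z^n) := by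
  refine summable_bd (b := fun n => cb (n+1)) 1 (fun n => ?_) hz
  have hn : (0:ℝ) ≤ (n:ℝ) := n.cast_nonneg
  calc |cb (n+1)| ≤ 1 := abs_cb_le n
    _ ≤ 1 * ((n:ℝ)+1) := by linarith

lemma key2 {z : ℝ} (hz : |z| < 1) :
    (∑' n : ℕ, cb (n+1) * z^n) = 1 / (Real.sqrt (1-z) * (1 + Real.sqrt (1-z))) := by
  have h1 : z < 1 := lt_of_le_of_lt (le_abs_self z) hz
  have hs0 : 0 < Real.sqrt (1-z) := Real.sqrt_pos.2 (by linarith)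
  have hsq : Real.sqrt (1-z)^2 = 1-z := Real.sq_sqrt (by linarith)
  rcases eq_or_ne z 0 with rfl | hz0
  · have : (∑' n : ℕ, cb (n+1) * (0:ℝ)^n) = cb 1 := by
      rw [tsum_eq_single 0 (fun n hn => by simp [zero_pow hn])]
      simp
    rw [this, cb_one]
    norm_num
  · have hFs : Fs z = (∑' n : ℕ, cb (n+1) * z^n) * z := by
      rw [Fs, ← tsum_mul_right]
      exact tsum_congr fun n => by ring
    have hA := Fs_eq hz
    set s := Real.sqrt (1-z) with hsdef
    set D := ∑' n : ℕ, cb (n+1) * z^n with hD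
    -- 1 + D*z = 1/s
    have h2 : 1 + D * z = 1/s := by rw [← hFs] at *; linarith [hA]
    have hne : s ≠ 0 := ne_of_gt hs0
    have hne2 : 1 + s ≠ 0 := by positivity
    have hzs : z = (1-s)*(1+s) := by nlinarith [hsq]
    have hs1 : (1:ℝ) - s ≠ 0 := by
      intro h
      apply hz0
      nlinarith [hsq]
    rw [eq_div_iff (by positivity : s * (1+s) ≠ 0)]
    have h4 : D * z = 1/s - 1 := by linarith [h2]
    refine mul_left_cancel₀ hs1 ?_
    calc (1-s) * (D * (s*(1+s))) = (D * z) * s := by rw [hzs]; ring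
      _ = (1/s - 1) * s := by rw [h4]
      _ = 1 - s := by field_simp
      _ = (1-s) * 1 := by ring

lemma hasDerivAt_L {t : ℝ} (ht : t < 1) :
    HasDerivAt (fun x : ℝ => 2 * Real.log (2/(1+Real.sqrt (1-x))))
      (1/(Real.sqrt (1-t)*(1+Real.sqrt (1-t)))) t := by
  have hs0 : 0 < Real.sqrt (1-t) := Real.sqrt_pos.2 (by linarith)
  set s := Real.sqrt (1-t) with hsdef
  have hne : s ≠ 0 := ne_of_gt hs0
  have hne2 : (1:ℝ) + s ≠ 0 := by positivity
  have h1 : HasDerivAt (fun x : ℝ => 1 + Real.sqrt (1-x)) (-(1/(2*s))) t :=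
    (sqrt_deriv ht).const_add 1
  have h2 := (h1.inv hne2).const_mul (2:ℝ)
  have h3 : (2:ℝ)/(1+s) ≠ 0 := by positivity
  have h4 := (h2.log (by simpa [div_eq_mul_inv] using h3)).const_mul (2:ℝ)
  refine h4.congr_deriv ?_
  rw [hsdef] at *
  simp only [Pi.inv_apply]
  field_simp

lemma Gs_eq {z : ℝ} (hz : |z| < 1) : Gs z = 2 * Real.log (2/(1+Real.sqrt (1-z))) := by
  have key : ∀ t ∈ Set.uIcc (0:ℝ) z,
      HasDerivAt (fun x => Gs x - 2 * Real.log (2/(1+Real.sqrt (1-x)))) 0 t := by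
    intro t ht
    have ht1 : |t| < 1 := mem_uIcc_abs hz ht
    have hlt : t < 1 := lt_of_le_of_lt (le_abs_self t) ht1
    have hd := (hasDerivAt_Gs ht1).sub (hasDerivAt_L hlt)
    rw [key2 ht1, sub_self] at hd
    exact hd
  have hint := intervalIntegral.integral_eq_sub_of_hasDerivAt key
    (_root_.intervalIntegrable_const (c := (0:ℝ)))
  norm_num [Gs_zero, Real.sqrt_one, Real.log_one] at hint
  linarith [hint]

noncomputable def D2 (t : ℝ) : ℝ := ∑' n : ℕ, (cb (n+1)/((n:ℝ)+1)) * t^n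

lemma summable_D2 {z : ℝ} (hz : |z| < 1) :
    Summable (fun n : ℕ => (cb (n+1)/((n:ℝ)+1)) * z^n) := by
  refine summable_bd (b := fun n => cb (n+1)/((n:ℝ)+1)) 1 (fun n => ?_) hz
  have hn : (0:ℝ) ≤ (n:ℝ) := n.cast_nonneg
  calc |cb (n+1)/((n:ℝ)+1)| ≤ 1 := abs_cb_div_le n
    _ ≤ 1 * ((n:ℝ)+1) := by linarith

lemma Hs_eq {z : ℝ} (h0 : 0 ≤ z) (hz : z < 1) :
    Hs z = 2 * ∫ t in (0:ℝ)..z, Real.log (2/(1+Real.sqrt (1-t))) / t := by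
  have hza : |z| < 1 := by rwa [abs_of_nonneg h0]
  have key : ∀ t ∈ Set.uIcc (0:ℝ) z, HasDerivAt Hs (D2 t) t :=
    fun t ht => hasDerivAt_Hs (mem_uIcc_abs hza ht)
  have huIcc : Set.uIcc (0:ℝ) z = Set.Icc 0 z := Set.uIcc_of_le h0
  have hmono : MonotoneOn D2 (Set.uIcc (0:ℝ) z) := by
    rw [huIcc]
    intro x hx y hy hxy
    have hxa : |x| < 1 := by rw [abs_of_nonneg hx.1]; exact lt_of_le_of_lt hx.2 hz
    have hya : |y| < 1 := by rw [abs_of_nonneg hy.1]; exact lt_of_le_of_lt hy.2 hz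
    refine (summable_D2 hxa).tsum_le_tsum (fun n => ?_) (summable_D2 hya)
    refine mul_le_mul_of_nonneg_left (pow_le_pow_left₀ hx.1 hxy n) ?_
    have := cb_nonneg (n+1)
    positivity
  have hint : IntervalIntegrable D2 volume 0 z := hmono.intervalIntegrable
  have hFTC := intervalIntegral.integral_eq_sub_of_hasDerivAt key hint
  rw [Hs_zero, sub_zero] at hFTC
  rw [← hFTC, ← intervalIntegral.integral_const_mul]
  refine intervalIntegral.integral_congr_ae (MeasureTheory.ae_of_all _ fun t htm => ?_)
  rw [Set.uIoc_of_le h0] at htm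
  have ht0 : 0 < t := htm.1
  have htlt : t < 1 := lt_of_le_of_lt htm.2 hz
  have hta : |t| < 1 := by rw [abs_of_pos ht0]; exact htlt
  have hGs : Gs t = D2 t * t := by
    rw [Gs, D2, ← tsum_mul_right]
    exact tsum_congr fun n => by ring
  rw [Gs_eq hta] at hGs
  rw [eq_comm] at hGs
  field_simp [ne_of_gt ht0] at hGs ⊢
  linarith [hGs]

lemma hcoef (n : ℕ) : (Nat.choose (2*(n+1)) (n+1) : ℝ) / (((n:ℝ)+1)^2 * 4^(n+1))
    = cb (n+1)/((n:ℝ)+1)^2 := by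
  have h : Nat.centralBinom (n+1) = Nat.choose (2*(n+1)) (n+1) := rfl
  rw [cb, h, div_div, mul_comm (((n:ℝ)+1)^2) ((4:ℝ)^(n+1))]

lemma summable_Hterm {z : ℝ} (hz : |z| < 1) :
    Summable (fun n : ℕ => (cb (n+1)/((n:ℝ)+1)^2) * z^(n+1)) := by
  have : ∀ n : ℕ, (cb (n+1)/((n:ℝ)+1)^2) * z^(n+1) = ((cb (n+1)/((n:ℝ)+1)^2)*z) * z^n :=
    fun n => by ring
  rw [funext this]
  refine summable_bd (b := fun n => (cb (n+1)/((n:ℝ)+1)^2)*z) 1 (fun n => ?_) hz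
  have hn : (0:ℝ) ≤ (n:ℝ) := n.cast_nonneg
  rw [abs_mul]
  calc |cb (n+1)/((n:ℝ)+1)^2| * |z| ≤ 1 * 1 :=
        mul_le_mul (abs_cb_div_sq_le n) hz.le (abs_nonneg z) zero_le_one
    _ ≤ 1 * ((n:ℝ)+1) := by linarith

lemma part1 {z : ℝ} (h0 : 0 ≤ z) (hz : z < 1) :
    HasSum (fun n : ℕ => ((Nat.choose (2*(n+1)) (n+1) : ℝ) / (((n:ℝ)+1)^2 * 4^(n+1))) * z^(n+1))
      (2 * ∫ t in (0:ℝ)..z, Real.log (2/(1+Real.sqrt (1-t))) / t) := by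
  have hza : |z| < 1 := by rwa [abs_of_nonneg h0]
  have hsum := (summable_Hterm hza).hasSum
  have heq : (∑' n : ℕ, (cb (n+1)/((n:ℝ)+1)^2) * z^(n+1))
      = 2 * ∫ t in (0:ℝ)..z, Real.log (2/(1+Real.sqrt (1-t))) / t := Hs_eq h0 hz
  rw [heq] at hsum
  have hfe : (fun n : ℕ => ((Nat.choose (2*(n+1)) (n+1) : ℝ) / (((n:ℝ)+1)^2 * 4^(n+1))) * z^(n+1))
      = fun n : ℕ => (cb (n+1)/((n:ℝ)+1)^2) * z^(n+1) := funext fun n => by rw [hcoef]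
  rw [hfe]
  exact hsum

lemma Ftilde_bound {t : ℝ} (ht : t ∈ Set.Icc (0:ℝ) 1) :
    ‖Real.log (2/(1+Real.sqrt (1-t))) / t‖ ≤ 1 := by
  rcases eq_or_lt_of_le ht.1 with h0 | h0
  · rw [← h0]; norm_num
  · set s := Real.sqrt (1-t) with hsdef
    have hs0 : 0 ≤ s := Real.sqrt_nonneg _
    have hsq : s^2 = 1-t := Real.sq_sqrt (by linarith [ht.2])
    have hs1 : s < 1 := by nlinarith
    have hs2 : (1:ℝ) + s ≠ 0 := by positivity
    have hq1 : (1:ℝ) ≤ 2/(1+s) := by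
      rw [le_div_iff₀ (by positivity)]; linarith
    have hlog0 : 0 ≤ Real.log (2/(1+s)) := Real.log_nonneg hq1
    have hup : Real.log (2/(1+s)) ≤ 2/(1+s) - 1 :=
      Real.log_le_sub_one_of_pos (by positivity)
    have hq : (2/(1+s)) * (1+s) = 2 := by field_simp
    have hFnn : 0 ≤ Real.log (2/(1+s)) / t := div_nonneg hlog0 h0.le
    rw [Real.norm_eq_abs, abs_of_nonneg hFnn, div_le_one h0]
    -- log(2/(1+s)) ≤ t
    have hstep : 2/(1+s) - 1 ≤ t := by nlinarith [hsq, hq]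
    linarith

lemma Ftilde_integrableOn :
    MeasureTheory.IntegrableOn (fun t : ℝ => Real.log (2/(1+Real.sqrt (1-t))) / t)
      (Set.Icc (0:ℝ) 1) MeasureTheory.volume := by
  have hcont : Continuous (fun t : ℝ => 2/(1+Real.sqrt (1-t))) := by
    apply Continuous.div continuous_const
    · exact continuous_const.add (Real.continuous_sqrt.comp (continuous_const.sub continuous_id))
    · intro t
      have := Real.sqrt_nonneg (1-t)
      positivity
  have hmeas : Measurable (fun t : ℝ => Real.log (2/(1+Real.sqrt (1-t))) / t) :=
    (Real.measurable_log.comp hcont.measurable).div measurable_id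
  refine MeasureTheory.Measure.integrableOn_of_bounded (M := 1) ?_ hmeas.aestronglyMeasurable ?_
  · exact (measure_Icc_lt_top).ne
  · exact (MeasureTheory.ae_restrict_iff' measurableSet_Icc).2
      (MeasureTheory.ae_of_all _ fun t ht => Ftilde_bound ht)

lemma part2 :
    HasSum (fun n : ℕ => (Nat.choose (2*(n+1)) (n+1) : ℝ) / (((n:ℝ)+1)^2 * 4^(n+1)))
      (2 * ∫ t in (0:ℝ)..1, Real.log (2/(1+Real.sqrt (1-t))) / t) := by
  set a : ℕ → ℝ := fun n => cb (n+1)/((n:ℝ)+1)^2 with ha_def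
  have ha : Summable a := by
    have hb : Summable (fun n : ℕ => 1/((n:ℝ)+1)^2) := by
      have h1 : Summable (fun n : ℕ => 1/((n:ℝ))^2) :=
        (Real.summable_one_div_nat_pow (p := 2)).2 one_lt_two
      have h2 := (summable_nat_add_iff 1).2 h1
      refine h2.congr fun n => ?_
      push_cast
      ring
    refine Summable.of_norm_bounded (g := fun n : ℕ => 1/((n:ℝ)+1)^2) hb fun n => ?_
    rw [Real.norm_eq_abs, ha_def]
    have hnn : (0:ℝ) ≤ cb (n+1)/((n:ℝ)+1)^2 := by
      have := cb_nonneg (n+1); positivity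
    rw [abs_of_nonneg hnn]
    show cb (n+1)/((n:ℝ)+1)^2 ≤ 1/((n:ℝ)+1)^2
    gcongr
    exact cb_le_one _
  -- sequence u k → 1
  set u : ℕ → ℝ := fun k => 1 - 1/((k:ℝ)+1) with hu_def
  have hk0 : ∀ k : ℕ, (0:ℝ) ≤ (k:ℝ) := fun k => Nat.cast_nonneg k
  have hu0 : ∀ k, 0 ≤ u k := by
    intro k
    have h1 : 1/((k:ℝ)+1) ≤ 1 := by
      rw [div_le_one (by positivity)]
      linarith [hk0 k]
    simp only [hu_def]
    linarith
  have hu1 : ∀ k, u k < 1 := by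
    intro k
    have h1 : 0 < 1/((k:ℝ)+1) := by positivity
    simp only [hu_def]
    linarith
  have hutend : Filter.Tendsto u atTop (nhds 1) := by
    have h1 : Filter.Tendsto (fun k : ℕ => 1/((k:ℝ)+1)) atTop (nhds 0) :=
      tendsto_one_div_add_atTop_nhds_zero_nat
    have h2 := Filter.Tendsto.sub (tendsto_const_nhds (x := (1:ℝ)) (f := atTop (α := ℕ))) h1
    simpa [hu_def, one_div] using h2
  -- limit of sums
  have hlim1 : Filter.Tendsto (fun k => Hs (u k)) atTop (nhds (∑' n, a n)) := by
    have hab : ∀ n : ℕ, Filter.Tendsto (fun k => a n * (u k)^(n+1)) atTop (nhds (a n)) := by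
      intro n
      have hp : Filter.Tendsto (fun k => (u k)^(n+1)) atTop (nhds 1) := by
        simpa using hutend.pow (n+1)
      simpa using (hp.const_mul (a n))
    have hbd : ∀ᶠ k in atTop, ∀ n : ℕ, ‖a n * (u k)^(n+1)‖ ≤ a n := by
      refine Filter.Eventually.of_forall fun k => fun n => ?_
      have han : 0 ≤ a n := by
        have := cb_nonneg (n+1)
        simp only [ha_def]
        positivity
      rw [Real.norm_eq_abs, abs_mul, abs_of_nonneg han, abs_pow,
        abs_of_nonneg (hu0 k)]
      calc a n * u k ^ (n+1) ≤ a n * 1 := by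
            refine mul_le_mul_of_nonneg_left ?_ han
            exact pow_le_one₀ (hu0 k) (hu1 k).le
        _ = a n := mul_one _
    have hmain := tendsto_tsum_of_dominated_convergence (𝓕 := atTop (α := ℕ))
      (f := fun k n => a n * (u k)^(n+1)) (g := a) (bound := a) ha hab hbd
    refine hmain.congr fun k => ?_
    rw [Hs]
  -- limit of integrals
  have hlim2 : Filter.Tendsto (fun k => Hs (u k)) atTop
      (nhds (2 * ∫ t in (0:ℝ)..1, Real.log (2/(1+Real.sqrt (1-t))) / t)) := by
    have hcOn := intervalIntegral.continuousOn_primitive_interval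
      (a := (0:ℝ)) (b := (1:ℝ)) (μ := MeasureTheory.volume)
      (f := fun t : ℝ => Real.log (2/(1+Real.sqrt (1-t))) / t) ?_
    · have h1mem : (1:ℝ) ∈ Set.uIcc (0:ℝ) 1 := Set.right_mem_uIcc
      have hcw := (hcOn 1 h1mem).tendsto
      have humem : ∀ᶠ k in atTop, u k ∈ Set.uIcc (0:ℝ) 1 := by
        refine Filter.Eventually.of_forall fun k => ?_
        rw [Set.uIcc_of_le zero_le_one]
        exact ⟨hu0 k, (hu1 k).le⟩
      have hT : Filter.Tendsto u atTop (nhdsWithin 1 (Set.uIcc (0:ℝ) 1)) :=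
        tendsto_nhdsWithin_of_tendsto_nhds_of_eventually_within u hutend humem
      have hcomp := (hcw.comp hT).const_mul (2:ℝ)
      refine hcomp.congr fun k => ?_
      simp only [Function.comp]
      rw [Hs_eq (hu0 k) (hu1 k)]
    · rw [Set.uIcc_of_le zero_le_one]
      exact Ftilde_integrableOn
  have hfinal : (∑' n, a n) = 2 * ∫ t in (0:ℝ)..1, Real.log (2/(1+Real.sqrt (1-t))) / t :=
    tendsto_nhds_unique hlim1 hlim2
  have hfe : (fun n : ℕ => (Nat.choose (2*(n+1)) (n+1) : ℝ) / (((n:ℝ)+1)^2 * 4^(n+1)))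
      = a := funext fun n => by rw [hcoef]
  rw [hfe, ← hfinal]
  exact ha.hasSum

theorem central_binom_weight_two_integral :
    (∀ z : ℝ, 0 ≤ z → z < 1 →
      HasSum (fun n : ℕ =>
        ((Nat.choose (2 * (n + 1)) (n + 1) : ℝ) / (((n : ℝ) + 1) ^ 2 * 4 ^ (n + 1))) *
          z ^ (n + 1))
        (2 * ∫ t in (0:ℝ)..z, Real.log (2 / (1 + Real.sqrt (1 - t))) / t))
    ∧ HasSum (fun n : ℕ =>
        (Nat.choose (2 * (n + 1)) (n + 1) : ℝ) / (((n : ℝ) + 1) ^ 2 * 4 ^ (n + 1)))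
        (2 * ∫ t in (0:ℝ)..(1:ℝ), Real.log (2 / (1 + Real.sqrt (1 - t))) / t) :=
  ⟨fun _ h0 hz => part1 h0 hz, part2⟩
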